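/- A cluster transformation DT : 𝒳 ⇢ 𝒳 of a seed 𝒳-torus with coordinates (X_i) tropicalizes to the map sending each positive basic lamination l_i⁺ to the negative basic lamination l_i⁻ if and only if for all i, j, the degree of X_i in DT*(X_j) equals −δ_{ij}, where deg_{X_i} of a ratio f/g of positive-coefficient polynomials is deg_{X_i} f − deg_{X_i} g. -/

import Mathlib

open BigOperators

/-- The tropicalization of a polynomial with positive coefficients. -/
def tropPoly {n : ℕ} (f : MvPolynomial (Fin n) ℤ) (x : Fin n → ℤ) : ℤ :=
  WithBot.unbotD 0 (f.support.sup fun d => ((∑ i, (d i : ℤ) * x i : ℤ) : WithBot ℤ))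

/-- A polynomial is positive if it is nonzero and all its coefficients are nonnegative. -/
def IsPosPoly {n : ℕ} (f : MvPolynomial (Fin n) ℤ) : Prop :=
  f ≠ 0 ∧ ∀ d, 0 ≤ f.coeff d

/-- The degree of `f` in the variable `X_i`. -/
def degX {n : ℕ} (i : Fin n) (f : MvPolynomial (Fin n) ℤ) : ℤ :=
  ((f.support.sup fun d => d i : ℕ) : ℤ)

lemma trop_eq_deg {n : ℕ} (i : Fin n) (f : MvPolynomial (Fin n) ℤ) (hf : f ≠ 0) :
    tropPoly f (fun a => if a = i then 1 else 0) = degX i f := by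
  have hs : f.support.Nonempty := MvPolynomial.support_nonempty.mpr hf
  unfold tropPoly degX
  have h1 : ∀ d : Fin n →₀ ℕ,
      (∑ a, (d a : ℤ) * (if a = i then 1 else 0)) = (d i : ℤ) := by
    intro d
    simp [mul_ite]
  simp only [h1]
  have key : (f.support.sup fun d => ((d i : ℤ) : WithBot ℤ))
      = (((f.support.sup fun d => d i : ℕ) : ℤ) : WithBot ℤ) := by
    rw [← Finset.sup'_eq_sup hs, ← Finset.sup'_eq_sup hs,
      Finset.comp_sup'_eq_sup'_comp hs (g := fun m : ℕ => ((m : ℤ) : WithBot ℤ))]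
    · rfl
    · intro a b
      simp [Nat.cast_max]
  rw [key, WithBot.unbotD_coe]

theorem stmt_14 {n : ℕ}
    -- the pullbacks DT*(X_j) = f j / g j, each a positive rational function
    (f g : Fin n → MvPolynomial (Fin n) ℤ)
    (hf : ∀ j, IsPosPoly (f j)) (hg : ∀ j, IsPosPoly (g j)) :
    -- DT^t sends every positive basic lamination l_i⁺ = e_i to l_i⁻ = -e_i ...
    (∀ i j : Fin n,
        tropPoly (f j) (fun a => if a = i then 1 else 0) -
          tropPoly (g j) (fun a => if a = i then 1 else 0) =
        -(if i = j then 1 else 0)) ↔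
      -- ... iff deg_{X_i} DT*(X_j) = -δ_{ij}
      (∀ i j : Fin n, degX i (f j) - degX i (g j) = -(if i = j then 1 else 0)) := by
  constructor <;> intro h i j
  · rw [← trop_eq_deg i (f j) (hf j).1, ← trop_eq_deg i (g j) (hg j).1]; exact h i j
  · rw [trop_eq_deg i (f j) (hf j).1, trop_eq_deg i (g j) (hg j).1]; exact h i j
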